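/- Let (φ(k,l))_{k,l≥0} be real constants such that φ(k,l) ≥ 0 and φ(k,l) = φ(k+1,l) + φ(k,l+1) for all k,l ≥ 0. Then there exists a unique finite Borel measure ν on [0,1] such that φ(k,l) = ∫ q^k (1-q)^l ν(dq) for all k,l ≥ 0. -/

import Mathlib

open MeasureTheory Finset Filter Topology Set

section Alg
variable (φ : ℕ → ℕ → ℝ)


/-- iterated recursion -/
lemma keyid (hrec : ∀ k l : ℕ, φ k l = φ (k + 1) l + φ k (l + 1)) :
    ∀ (n k l : ℕ), (∑ j ∈ range (n+1), (n.choose j : ℝ) * φ (k+j) (l+(n-j))) = φ k l := by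
  intro n
  induction n with
  | zero => intro k l; simp
  | succ n ih =>
    intro k l
    have h1 : ∑ j ∈ range (n+2), ((n+1).choose j : ℝ) * φ (k+j) (l+(n+1-j))
        = (∑ j ∈ range (n+1), ((n+1).choose (j+1) : ℝ) * φ (k+(j+1)) (l+(n+1-(j+1))))
          + ((n+1).choose 0 : ℝ) * φ (k+0) (l+(n+1-0)) := Finset.sum_range_succ' _ (n+1)
    have h2 : ∑ j ∈ range (n+2), ((n:ℕ).choose j : ℝ) * φ (k+j) (l+(n+1-j))
        = (∑ j ∈ range (n+1), ((n:ℕ).choose (j+1) : ℝ) * φ (k+(j+1)) (l+(n+1-(j+1))))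
          + ((n:ℕ).choose 0 : ℝ) * φ (k+0) (l+(n+1-0)) := Finset.sum_range_succ' _ (n+1)
    have h3 : ∑ j ∈ range (n+2), ((n:ℕ).choose j : ℝ) * φ (k+j) (l+(n+1-j))
        = ∑ j ∈ range (n+1), ((n:ℕ).choose j : ℝ) * φ (k+j) (l+(n+1-j)) := by
      rw [Finset.sum_range_succ]
      simp [Nat.choose_succ_self]
    rw [h1]
    have e1 : ∀ j ∈ range (n+1), ((n+1).choose (j+1) : ℝ) * φ (k+(j+1)) (l+(n+1-(j+1)))
        = ((n:ℕ).choose j : ℝ) * φ (k+(j+1)) (l+(n-j))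
          + ((n:ℕ).choose (j+1) : ℝ) * φ (k+(j+1)) (l+(n+1-(j+1))) := by
      intro j hj
      have hnj : n+1-(j+1) = n-j := by omega
      rw [Nat.choose_succ_succ, Nat.cast_add, add_mul, hnj]
    rw [Finset.sum_congr rfl e1, Finset.sum_add_distrib]
    have h4 : (∑ j ∈ range (n+1), ((n:ℕ).choose (j+1) : ℝ) * φ (k+(j+1)) (l+(n+1-(j+1))))
          + ((n+1).choose 0 : ℝ) * φ (k+0) (l+(n+1-0))
        = ∑ j ∈ range (n+1), ((n:ℕ).choose j : ℝ) * φ (k+j) (l+(n+1-j)) := by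
      rw [← h3, h2]; simp
    rw [add_assoc, h4, ← Finset.sum_add_distrib]
    have e2 : ∀ j ∈ range (n+1), ((n:ℕ).choose j : ℝ) * φ (k+(j+1)) (l+(n-j))
          + ((n:ℕ).choose j : ℝ) * φ (k+j) (l+(n+1-j))
        = ((n:ℕ).choose j : ℝ) * φ (k+j) (l+(n-j)) := by
      intro j hj
      rw [Finset.mem_range] at hj
      have hj' : j ≤ n := Nat.lt_succ_iff.mp hj
      have : n + 1 - j = (n - j) + 1 := by omega
      rw [this]
      have h5 := hrec (k+j) (l+(n-j))
      have h6 : k + (j+1) = (k+j)+1 := by omega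
      rw [h6, ← add_assoc l (n-j) 1, ← mul_add, ← h5]
    rw [Finset.sum_congr rfl e2, ih]

lemma binom_ratio (k n j : ℕ) :
    (n.choose j) * ∏ a ∈ range k, (n+a+1) = ((n+k).choose (j+k)) * ∏ a ∈ range k, (j+a+1) := by
  induction k with
  | zero => simp
  | succ k ih =>
    rw [Finset.prod_range_succ, Finset.prod_range_succ, ← mul_assoc, ih]
    have h : (n+k+1) * (n+k).choose (j+k) = (n+k+1).choose (j+k+1) * (j+k+1) := by
      simpa [Nat.succ_eq_add_one] using Nat.add_one_mul_choose_eq (n+k) (j+k)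
    have h2 : n + (k+1) = n+k+1 := by omega
    have h3 : j + (k+1) = j+k+1 := by omega
    rw [h2, h3]
    generalize (n+k).choose (j+k) = A at h ⊢
    generalize (n+k+1).choose (j+k+1) = B at h ⊢
    calc A * (∏ a ∈ range k, (j+a+1)) * (n+k+1)
        = ((n+k+1) * A) * ∏ a ∈ range k, (j+a+1) := by ring
      _ = (B * (j+k+1)) * ∏ a ∈ range k, (j+a+1) := by rw [h]
      _ = B * ((∏ a ∈ range k, (j+a+1)) * (j+k+1)) := by ring
  
end Alg

lemma prod_diff_bound (k : ℕ) (x y : ℕ → ℝ)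
    (hx : ∀ a, a < k → x a ∈ Set.Icc (0:ℝ) 1) (hy : ∀ a, a < k → y a ∈ Set.Icc (0:ℝ) 1) :
    |∏ a ∈ range k, x a - ∏ a ∈ range k, y a| ≤ ∑ a ∈ range k, |x a - y a| := by
  induction k with
  | zero => simp
  | succ k ih =>
    have hx' : ∀ a, a < k → x a ∈ Set.Icc (0:ℝ) 1 := fun a ha => hx a (ha.trans (Nat.lt_succ_self k))
    have hy' : ∀ a, a < k → y a ∈ Set.Icc (0:ℝ) 1 := fun a ha => hy a (ha.trans (Nat.lt_succ_self k))
    rw [Finset.prod_range_succ, Finset.prod_range_succ, Finset.sum_range_succ]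
    have key : (∏ a ∈ range k, x a) * x k - (∏ a ∈ range k, y a) * y k
        = (∏ a ∈ range k, x a - ∏ a ∈ range k, y a) * x k
          + (∏ a ∈ range k, y a) * (x k - y k) := by ring
    rw [key]
    refine (abs_add_le _ _).trans ?_
    rw [abs_mul, abs_mul]
    have hxk := hx k (Nat.lt_succ_self k)
    have hyP : |∏ a ∈ range k, y a| ≤ 1 := by
      rw [abs_of_nonneg (Finset.prod_nonneg fun a ha => (hy' a (Finset.mem_range.mp ha)).1)]
      exact Finset.prod_le_one (fun a ha => (hy' a (Finset.mem_range.mp ha)).1)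
        (fun a ha => (hy' a (Finset.mem_range.mp ha)).2)
    have hxk1 : |x k| ≤ 1 := by rw [abs_of_nonneg hxk.1]; exact hxk.2
    have t1 : |∏ a ∈ range k, x a - ∏ a ∈ range k, y a| * |x k| ≤ ∑ a ∈ range k, |x a - y a| :=
      le_trans (mul_le_of_le_one_right (abs_nonneg _) hxk1) (ih hx' hy')
    have t2 : |∏ a ∈ range k, y a| * |x k - y k| ≤ |x k - y k| :=
      mul_le_of_le_one_left (abs_nonneg _) hyP
    exact add_le_add t1 t2

lemma factor_est (k n a j : ℕ) (ha : a < k) (hj : j ≤ n) :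
    |((j:ℝ)+a+1)/((n:ℝ)+a+1) - ((j:ℝ)+k)/((n:ℝ)+k)| ≤ (k:ℝ)/((n:ℝ)+1) := by
  have hk0 : 1 ≤ k := Nat.one_le_iff_ne_zero.mpr (by omega)
  have hk1 : (1:ℝ) ≤ k := by exact_mod_cast hk0
  have hD1 : (0:ℝ) < (n:ℝ)+a+1 := by positivity
  have hD2 : (0:ℝ) < (n:ℝ)+k := by nlinarith [Nat.cast_nonneg (α := ℝ) n]
  have hjn : (j:ℝ) ≤ n := by exact_mod_cast hj
  have hak : (a:ℝ)+1 ≤ k := by exact_mod_cast Nat.succ_le_of_lt ha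
  rw [div_sub_div _ _ hD1.ne' hD2.ne', abs_div]
  rw [abs_of_pos (by positivity : (0:ℝ) < ((n:ℝ)+a+1)*((n:ℝ)+k))]
  rw [div_le_div_iff₀ (by positivity) (by positivity)]
  have hnum : ((j:ℝ)+a+1)*((n:ℝ)+k) - ((n:ℝ)+a+1)*((j:ℝ)+k)
      = -((((k:ℝ)-a-1)) * ((n:ℝ)-j)) := by ring
  rw [hnum, abs_neg, abs_of_nonneg (by nlinarith : (0:ℝ) ≤ ((k:ℝ)-a-1) * ((n:ℝ)-j))]
  have e1 : ((k:ℝ)-a-1) ≤ k := by nlinarith [Nat.cast_nonneg (α := ℝ) a]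
  have e2 : ((n:ℝ)-j) ≤ (n:ℝ)+a+1 := by nlinarith [Nat.cast_nonneg (α := ℝ) j, Nat.cast_nonneg (α := ℝ) a]
  have e3 : ((n:ℝ)+1) ≤ (n:ℝ)+k := by linarith
  have p1 : (0:ℝ) ≤ (n:ℝ)-j := by linarith
  have m1 : ((n:ℝ)-j)*((n:ℝ)+1) ≤ ((n:ℝ)+a+1)*((n:ℝ)+k) :=
    mul_le_mul e2 e3 (by positivity) (by positivity)
  calc ((k:ℝ)-a-1) * ((n:ℝ)-j) * ((n:ℝ)+1) = ((k:ℝ)-a-1) * (((n:ℝ)-j) * ((n:ℝ)+1)) := by ring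
    _ ≤ (k:ℝ) * (((n:ℝ)+a+1)*((n:ℝ)+k)) :=
        mul_le_mul e1 m1 (mul_nonneg p1 (by positivity)) (by positivity)

lemma binom_ratio_real (k n j : ℕ) (hj : j ≤ n) :
    (n.choose j : ℝ) = ((n+k).choose (j+k) : ℝ) * ∏ a ∈ range k, (((j:ℝ)+a+1)/((n:ℝ)+a+1)) := by
  have hnat := binom_ratio k n j
  have hcast : (n.choose j : ℝ) * ∏ a ∈ range k, ((n:ℝ)+a+1)
      = ((n+k).choose (j+k) : ℝ) * ∏ a ∈ range k, ((j:ℝ)+a+1) := by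
    exact_mod_cast hnat
  have hP : (0:ℝ) < ∏ a ∈ range k, ((n:ℝ)+a+1) :=
    Finset.prod_pos fun a _ => by positivity
  rw [Finset.prod_div_distrib, ← mul_div_assoc, eq_div_iff hP.ne']
  exact hcast

lemma Tconv (φ : ℕ → ℕ → ℝ) (hpos : ∀ k l : ℕ, 0 ≤ φ k l)
    (hrec : ∀ k l : ℕ, φ k l = φ (k + 1) l + φ k (l + 1)) (k : ℕ) :
    Tendsto (fun m : ℕ => ∑ i ∈ range (m+1), ((i:ℝ)/(m:ℝ))^k * ((m.choose i : ℝ) * φ i (m-i)))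
      atTop (𝓝 (φ k 0)) := by
  rcases Nat.eq_zero_or_pos k with hk | hk
  · subst hk
    have hconst : ∀ m : ℕ, ∑ i ∈ range (m+1), ((i:ℝ)/(m:ℝ))^0 * ((m.choose i : ℝ) * φ i (m-i))
        = φ 0 0 := by
      intro m
      have h := keyid φ hrec m 0 0
      simpa using h
    rw [show (fun m : ℕ => ∑ i ∈ range (m+1), ((i:ℝ)/(m:ℝ))^0 * ((m.choose i : ℝ) * φ i (m-i)))
        = fun _ => φ 0 0 from funext hconst]
    exact tendsto_const_nhds
  -- main case k ≥ 1
  have hφ00 : (0:ℝ) ≤ φ 0 0 := hpos 0 0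
  rw [← tendsto_add_atTop_iff_nat k, ← tendsto_sub_nhds_zero_iff]
  apply squeeze_zero_norm
    (a := fun n : ℕ => ((k:ℝ)*k/((n:ℝ)+1) + ((k:ℝ)/((n:ℝ)+(k:ℝ)))^k) * φ 0 0)
  · intro n
    have hcast : ((n+k : ℕ):ℝ) = (n:ℝ)+(k:ℝ) := by push_cast; ring
    have hmpos : (0:ℝ) < (n:ℝ)+(k:ℝ) := by
      have : (1:ℝ) ≤ (k:ℝ) := by exact_mod_cast hk
      have : (0:ℝ) ≤ (n:ℝ) := Nat.cast_nonneg n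
      linarith
    -- abbreviations
    set S : ℝ := ∑ i ∈ range (n+k+1), ((i:ℝ)/((n+k:ℕ):ℝ))^k * (((n+k).choose i : ℝ) * φ i (n+k-i)) with hS
    have hkey : (∑ j ∈ range (n+1), (n.choose j : ℝ) * φ (k+j) (0+(n-j))) = φ k 0 :=
      keyid φ hrec n k 0
    have hm1 : n + k + 1 = k + (n+1) := by omega
    have hsplit : S = (∑ i ∈ range k, ((i:ℝ)/((n+k:ℕ):ℝ))^k * (((n+k).choose i : ℝ) * φ i (n+k-i)))
        + ∑ j ∈ range (n+1), (((k+j:ℕ):ℝ)/((n+k:ℕ):ℝ))^k * (((n+k).choose (k+j) : ℝ) * φ (k+j) (n+k-(k+j))) := by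
      rw [hS, hm1, Finset.sum_range_add]
    -- second sum massage
    have hsub : ∀ j ∈ range (n+1), n + k - (k+j) = n - j := by intro j _; omega
    -- total mass bound for subsums
    have htot : (∑ i ∈ range (n+k+1), ((n+k).choose i : ℝ) * φ i (n+k-i)) = φ 0 0 := by
      have h := keyid φ hrec (n+k) 0 0
      simpa using h
    have htot_split : (∑ i ∈ range k, ((n+k).choose i : ℝ) * φ i (n+k-i))
        + (∑ j ∈ range (n+1), ((n+k).choose (k+j) : ℝ) * φ (k+j) (n+k-(k+j))) = φ 0 0 := by
      have hts := Finset.sum_range_add (fun i => (((n+k).choose i : ℝ)) * φ i (n+k-i)) k (n+1)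
      rw [← hm1] at hts
      rw [htot] at hts
      exact hts.symm
    have hnn1 : (0:ℝ) ≤ ∑ i ∈ range k, ((n+k).choose i : ℝ) * φ i (n+k-i) :=
      Finset.sum_nonneg fun i _ => mul_nonneg (Nat.cast_nonneg _) (hpos _ _)
    have hnn2 : (0:ℝ) ≤ ∑ j ∈ range (n+1), ((n+k).choose (k+j) : ℝ) * φ (k+j) (n+k-(k+j)) :=
      Finset.sum_nonneg fun j _ => mul_nonneg (Nat.cast_nonneg _) (hpos _ _)
    have hb1 : (∑ i ∈ range k, ((n+k).choose i : ℝ) * φ i (n+k-i)) ≤ φ 0 0 := by linarith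
    have hb2 : (∑ j ∈ range (n+1), ((n+k).choose (k+j) : ℝ) * φ (k+j) (n+k-(k+j))) ≤ φ 0 0 := by
      linarith
    -- first sum bound
    have hA : (∑ i ∈ range k, ((i:ℝ)/((n+k:ℕ):ℝ))^k * (((n+k).choose i : ℝ) * φ i (n+k-i)))
        ≤ ((k:ℝ)/((n:ℝ)+(k:ℝ)))^k * φ 0 0 := by
      calc (∑ i ∈ range k, ((i:ℝ)/((n+k:ℕ):ℝ))^k * (((n+k).choose i : ℝ) * φ i (n+k-i)))
          ≤ ∑ i ∈ range k, ((k:ℝ)/((n:ℝ)+(k:ℝ)))^k * (((n+k).choose i : ℝ) * φ i (n+k-i)) := by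
            refine Finset.sum_le_sum fun i hi => ?_
            have hik : (i:ℝ) ≤ (k:ℝ) := by
              exact_mod_cast (Nat.le_of_lt (Finset.mem_range.mp hi))
            have : ((i:ℝ)/((n+k:ℕ):ℝ))^k ≤ ((k:ℝ)/((n:ℝ)+(k:ℝ)))^k := by
              rw [hcast]
              have h1 : (i:ℝ)/((n:ℝ)+(k:ℝ)) ≤ (k:ℝ)/((n:ℝ)+(k:ℝ)) := by gcongr
              exact pow_le_pow_left₀ (by positivity) h1 k
            exact mul_le_mul_of_nonneg_right this
              (mul_nonneg (Nat.cast_nonneg _) (hpos _ _))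
        _ = ((k:ℝ)/((n:ℝ)+(k:ℝ)))^k * ∑ i ∈ range k, (((n+k).choose i : ℝ) * φ i (n+k-i)) := by
            rw [Finset.mul_sum]
        _ ≤ ((k:ℝ)/((n:ℝ)+(k:ℝ)))^k * φ 0 0 := by
            refine mul_le_mul_of_nonneg_left hb1 (by positivity)
    -- coefficient estimate
    have hcoef : ∀ j ∈ range (n+1),
        |(((k+j:ℕ):ℝ)/((n+k:ℕ):ℝ))^k * (((n+k).choose (k+j) : ℝ)) - (n.choose j : ℝ)|
          ≤ ((k:ℝ)*k/((n:ℝ)+1)) * (((n+k).choose (k+j) : ℝ)) := by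
      intro j hj
      have hjn : j ≤ n := Nat.lt_succ_iff.mp (Finset.mem_range.mp hj)
      have hkj : k + j = j + k := Nat.add_comm k j
      have hbr := binom_ratio_real k n j hjn
      rw [hkj, hbr]
      have hprodeq : (((j+k:ℕ):ℝ)/((n+k:ℕ):ℝ))^k
          = ∏ _a ∈ range k, (((j:ℝ)+(k:ℝ))/((n:ℝ)+(k:ℝ))) := by
        rw [Finset.prod_const, Finset.card_range, hcast]
        congr 1
        push_cast; ring
      rw [hprodeq]
      have hring : ∀ A B C : ℝ, A * C - C * B = C * (A - B) := by intros; ring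
      rw [hring, abs_mul, mul_comm (((k:ℝ)*k/((n:ℝ)+1))) _]
      rw [abs_of_nonneg (Nat.cast_nonneg ((n+k).choose (j+k)))]
      refine mul_le_mul_of_nonneg_left ?_ (Nat.cast_nonneg _)
      have hest := prod_diff_bound k (fun _ => ((j:ℝ)+(k:ℝ))/((n:ℝ)+(k:ℝ)))
          (fun a => ((j:ℝ)+a+1)/((n:ℝ)+a+1)) ?_ ?_
      · refine hest.trans ?_
        have : ∀ a ∈ range k,
            |((j:ℝ)+(k:ℝ))/((n:ℝ)+(k:ℝ)) - ((j:ℝ)+a+1)/((n:ℝ)+a+1)| ≤ (k:ℝ)/((n:ℝ)+1) := by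
          intro a ha
          rw [abs_sub_comm]
          exact factor_est k n a j (Finset.mem_range.mp ha) hjn
        refine (Finset.sum_le_sum this).trans ?_
        rw [Finset.sum_const, Finset.card_range, nsmul_eq_mul]
        rw [div_eq_mul_inv, div_eq_mul_inv]
        ring_nf
        exact le_refl _
      · intro a _
        constructor
        · positivity
        · rw [div_le_one hmpos]
          have : (j:ℝ) ≤ (n:ℝ) := by exact_mod_cast hjn
          linarith
      · intro a _
        constructor
        · positivity
        · rw [div_le_one (by positivity)]
          have : (j:ℝ) ≤ (n:ℝ) := by exact_mod_cast hjn
          linarith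
    -- assemble
    have hdiff : S - φ k 0
        = (∑ i ∈ range k, ((i:ℝ)/((n+k:ℕ):ℝ))^k * (((n+k).choose i : ℝ) * φ i (n+k-i)))
          + ∑ j ∈ range (n+1),
            ((((k+j:ℕ):ℝ)/((n+k:ℕ):ℝ))^k * (((n+k).choose (k+j) : ℝ)) - (n.choose j : ℝ))
              * φ (k+j) (n-j) := by
      rw [hsplit, ← hkey]
      rw [add_sub_assoc]
      congr 1
      rw [← Finset.sum_sub_distrib]
      refine Finset.sum_congr rfl fun j hj => ?_
      rw [hsub j hj]
      have : (0:ℕ) + (n-j) = n-j := Nat.zero_add _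
      rw [this]
      ring
    rw [Real.norm_eq_abs, hdiff]
    refine (abs_add_le _ _).trans ?_
    have habs1 : |∑ i ∈ range k, ((i:ℝ)/((n+k:ℕ):ℝ))^k * (((n+k).choose i : ℝ) * φ i (n+k-i))|
        ≤ ((k:ℝ)/((n:ℝ)+(k:ℝ)))^k * φ 0 0 := by
      rw [abs_of_nonneg (Finset.sum_nonneg fun i _ =>
        mul_nonneg (by positivity) (mul_nonneg (Nat.cast_nonneg _) (hpos _ _)))]
      exact hA
    have habs2 : |∑ j ∈ range (n+1),
        ((((k+j:ℕ):ℝ)/((n+k:ℕ):ℝ))^k * (((n+k).choose (k+j) : ℝ)) - (n.choose j : ℝ))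
          * φ (k+j) (n-j)|
        ≤ ((k:ℝ)*k/((n:ℝ)+1)) * φ 0 0 := by
      refine (Finset.abs_sum_le_sum_abs _ _).trans ?_
      calc ∑ j ∈ range (n+1),
            |((((k+j:ℕ):ℝ)/((n+k:ℕ):ℝ))^k * (((n+k).choose (k+j) : ℝ)) - (n.choose j : ℝ))
              * φ (k+j) (n-j)|
          ≤ ∑ j ∈ range (n+1), ((k:ℝ)*k/((n:ℝ)+1)) * (((n+k).choose (k+j) : ℝ)) * φ (k+j) (n-j) := by
            refine Finset.sum_le_sum fun j hj => ?_
            rw [abs_mul, abs_of_nonneg (hpos _ _)]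
            exact mul_le_mul_of_nonneg_right (hcoef j hj) (hpos _ _)
        _ = ((k:ℝ)*k/((n:ℝ)+1)) * ∑ j ∈ range (n+1), (((n+k).choose (k+j) : ℝ)) * φ (k+j) (n-j) := by
            rw [Finset.mul_sum]; refine Finset.sum_congr rfl fun j hj => by ring
        _ ≤ ((k:ℝ)*k/((n:ℝ)+1)) * φ 0 0 := by
            refine mul_le_mul_of_nonneg_left ?_ (by positivity)
            calc (∑ j ∈ range (n+1), (((n+k).choose (k+j) : ℝ)) * φ (k+j) (n-j))
                = ∑ j ∈ range (n+1), (((n+k).choose (k+j) : ℝ)) * φ (k+j) (n+k-(k+j)) := by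
                  refine Finset.sum_congr rfl fun j hj => by rw [hsub j hj]
              _ ≤ φ 0 0 := hb2
    calc |∑ i ∈ range k, ((i:ℝ)/((n+k:ℕ):ℝ))^k * (((n+k).choose i : ℝ) * φ i (n+k-i))|
          + |∑ j ∈ range (n+1),
            ((((k+j:ℕ):ℝ)/((n+k:ℕ):ℝ))^k * (((n+k).choose (k+j) : ℝ)) - (n.choose j : ℝ))
              * φ (k+j) (n-j)|
        ≤ ((k:ℝ)/((n:ℝ)+(k:ℝ)))^k * φ 0 0 + ((k:ℝ)*k/((n:ℝ)+1)) * φ 0 0 :=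
          add_le_add habs1 habs2
      _ = ((k:ℝ)*k/((n:ℝ)+1) + ((k:ℝ)/((n:ℝ)+(k:ℝ)))^k) * φ 0 0 := by ring
  · have b1 : Tendsto (fun n : ℕ => (k:ℝ)*k/((n:ℝ)+1)) atTop (𝓝 0) := by
      have h := (tendsto_const_div_atTop_nhds_zero_nat ((k:ℝ)*k)).comp (tendsto_add_atTop_nat 1)
      have : (fun n : ℕ => ((k:ℝ)*k)/((n+1:ℕ):ℝ)) = fun n : ℕ => (k:ℝ)*k/((n:ℝ)+1) := by
        funext n; push_cast; ring_nf
      rwa [← this]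
    have b2 : Tendsto (fun n : ℕ => ((k:ℝ)/((n:ℝ)+(k:ℝ)))^k) atTop (𝓝 0) := by
      have h0 : Tendsto (fun n : ℕ => (k:ℝ)/((n:ℝ)+(k:ℝ))) atTop (𝓝 0) := by
        have h := (tendsto_const_div_atTop_nhds_zero_nat ((k:ℝ))).comp (tendsto_add_atTop_nat k)
        have : (fun n : ℕ => ((k:ℝ))/((n+k:ℕ):ℝ)) = fun n : ℕ => (k:ℝ)/((n:ℝ)+(k:ℝ)) := by
          funext n; push_cast; ring_nf
        rwa [← this]
      have h1 := h0.pow k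
      simpa [zero_pow hk.ne'] using h1
    have hmul := (b1.add b2).mul_const (φ 0 0)
    simpa using hmul

lemma hint_integral (k : ℕ) (hk : 1 ≤ k) (c : ℝ) (hc0 : 0 ≤ c) (hc1 : c ≤ 1) :
    ∫ t in Set.Ioc (0:ℝ) 1, ((k:ℝ) * t^(k-1)) * (if c ≤ t then 1 else 0) = 1 - c^k := by
  have hfun : (fun t : ℝ => ((k:ℝ) * t^(k-1)) * (if c ≤ t then 1 else 0))
      = Set.indicator (Set.Ici c) (fun t => (k:ℝ) * t^(k-1)) := by
    funext t
    by_cases h : c ≤ t <;> simp [Set.indicator_apply, Set.mem_Ici, h]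
  rw [hfun, MeasureTheory.integral_indicator measurableSet_Ici,
    Measure.restrict_restrict measurableSet_Ici]
  have hiff : ∀ t : ℝ, t ≠ c → (t ∈ Set.Ici c ∩ Set.Ioc 0 1 ↔ t ∈ Set.Ioc c 1) := by
    intro t htc
    simp only [Set.mem_inter_iff, Set.mem_Ici, Set.mem_Ioc]
    constructor
    · rintro ⟨h1, h2, h3⟩; exact ⟨lt_of_le_of_ne h1 (Ne.symm htc), h3⟩
    · rintro ⟨h1, h2⟩; exact ⟨h1.le, lt_of_le_of_lt hc0 h1, h2⟩
  have hae : (Set.Ici c ∩ Set.Ioc 0 1 : Set ℝ) =ᵐ[volume] Set.Ioc c 1 := by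
    rw [Filter.eventuallyEq_set]
    refine MeasureTheory.ae_iff.mpr
      (measure_mono_null (t := {c}) (fun t ht => ?_) (Real.volume_singleton (a := c)))
    simp only [Set.mem_setOf_eq] at ht
    simp only [Set.mem_singleton_iff]
    by_contra hne
    exact ht (hiff t hne)
  rw [MeasureTheory.setIntegral_congr_set hae, ← intervalIntegral.integral_of_le hc1,
    intervalIntegral.integral_const_mul, integral_pow]
  have hcast : ((k-1:ℕ):ℝ) + 1 = (k:ℝ) := by
    have h := Nat.sub_add_cancel hk
    exact_mod_cast congrArg (Nat.cast : ℕ → ℝ) h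
  have hsub : k - 1 + 1 = k := Nat.sub_add_cancel hk
  rw [hsub, hcast, one_pow]
  have hkne : ((k:ℝ)) ≠ 0 := by
    have : (1:ℝ) ≤ (k:ℝ) := by exact_mod_cast hk
    linarith
  field_simp

lemma exists_repr (φ : ℕ → ℕ → ℝ) (hpos : ∀ k l : ℕ, 0 ≤ φ k l)
    (hrec : ∀ k l : ℕ, φ k l = φ (k + 1) l + φ k (l + 1)) :
    ∃ μR : Measure ℝ, IsFiniteMeasure μR ∧ μR (Set.Icc (0:ℝ) 1)ᶜ = 0 ∧
      ∀ k : ℕ, ∫ x, x^k ∂μR = φ k 0 := by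
  classical
  have hc00nn : 0 ≤ φ 0 0 := hpos 0 0
  set c00 := φ 0 0 with hc00
  set w : ℕ → ℕ → ℝ := fun m i => (m.choose i : ℝ) * φ i (m-i) with hw
  have hwnn : ∀ m i, 0 ≤ w m i := fun m i => mul_nonneg (Nat.cast_nonneg _) (hpos _ _)
  have hwsum : ∀ m, ∑ i ∈ Finset.range (m+1), w m i = c00 := by
    intro m; have h := keyid φ hrec m 0 0; simpa using h
  set Fm : ℕ → ℝ → ℝ :=
    fun m x => ∑ i ∈ Finset.range (m+1), if ((i:ℝ)/(m:ℝ)) ≤ x then w m i else 0 with hFm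
  have hFmmono : ∀ m, Monotone (Fm m) := by
    intro m x y hxy
    refine Finset.sum_le_sum fun i _ => ?_
    by_cases h : ((i:ℝ)/(m:ℝ)) ≤ x
    · rw [if_pos h, if_pos (h.trans hxy)]
    · rw [if_neg h]
      by_cases h2 : ((i:ℝ)/(m:ℝ)) ≤ y
      · rw [if_pos h2]; exact hwnn m i
      · rw [if_neg h2]
  have hFmnn : ∀ m x, 0 ≤ Fm m x := by
    intro m x
    refine Finset.sum_nonneg fun i _ => ?_
    by_cases h : ((i:ℝ)/(m:ℝ)) ≤ x
    · rw [if_pos h]; exact hwnn m i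
    · rw [if_neg h]
  have hFmle : ∀ m x, Fm m x ≤ c00 := by
    intro m x
    rw [← hwsum m]
    refine Finset.sum_le_sum fun i _ => ?_
    by_cases h : ((i:ℝ)/(m:ℝ)) ≤ x
    · rw [if_pos h]
    · rw [if_neg h]; exact hwnn m i
  have hdiv01 : ∀ m i : ℕ, i ∈ Finset.range (m+1) → 0 ≤ ((i:ℝ)/(m:ℝ)) ∧ ((i:ℝ)/(m:ℝ)) ≤ 1 := by
    intro m i hi
    have him : i ≤ m := Nat.lt_succ_iff.mp (Finset.mem_range.mp hi)
    constructor
    · positivity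
    · rcases Nat.eq_zero_or_pos m with rfl | hm
      · interval_cases i
        · simp
      · rw [div_le_one (by exact_mod_cast hm)]
        exact_mod_cast him
  have hFm1 : ∀ m x, (1:ℝ) ≤ x → Fm m x = c00 := by
    intro m x hx
    rw [← hwsum m]
    refine Finset.sum_congr rfl fun i hi => ?_
    rw [if_pos (((hdiv01 m i hi).2).trans hx)]
  have hFm0 : ∀ m x, x < 0 → Fm m x = 0 := by
    intro m x hx
    refine Finset.sum_eq_zero fun i hi => ?_
    rw [if_neg (by linarith [(hdiv01 m i hi).1])]
  -- subsequence extraction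
  set u : ℕ → (ℚ → Set.Icc (0:ℝ) c00) :=
    fun m q => ⟨Fm m (q:ℝ), ⟨hFmnn m q, hFmle m q⟩⟩ with hu
  obtain ⟨a, ψ, hψmono, hψtend⟩ := SeqCompactSpace.tendsto_subseq u
  set G : ℚ → ℝ := fun q => (a q : ℝ) with hG
  have hGlim : ∀ q : ℚ, Tendsto (fun j => Fm (ψ j) (q:ℝ)) atTop (𝓝 (G q)) := by
    intro q
    have h1 := tendsto_pi_nhds.mp hψtend q
    exact (continuous_subtype_val.tendsto _).comp h1
  have hGmono : ∀ q r : ℚ, q ≤ r → G q ≤ G r := by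
    intro q r hqr
    exact le_of_tendsto_of_tendsto' (hGlim q) (hGlim r)
      (fun j => hFmmono _ (by exact_mod_cast hqr))
  have hGnn : ∀ q, 0 ≤ G q := fun q => (a q).2.1
  have hGle : ∀ q, G q ≤ c00 := fun q => (a q).2.2
  have hG0 : ∀ q : ℚ, (q:ℝ) < 0 → G q = 0 := by
    intro q hq
    refine tendsto_nhds_unique (hGlim q) ?_
    simp only [hFm0 _ _ hq]
    exact tendsto_const_nhds
  have hG1 : ∀ q : ℚ, (1:ℝ) ≤ (q:ℝ) → G q = c00 := by
    intro q hq
    refine tendsto_nhds_unique (hGlim q) ?_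
    simp only [hFm1 _ _ hq]
    exact tendsto_const_nhds
  -- the distribution function
  set H : ℝ → ℝ := fun x => sInf (G '' {q : ℚ | x < (q:ℝ)}) with hH
  have hne : ∀ x : ℝ, (G '' {q : ℚ | x < (q:ℝ)}).Nonempty := by
    intro x
    obtain ⟨q, hq⟩ := exists_rat_gt x
    exact ⟨G q, ⟨q, hq, rfl⟩⟩
  have hbdd : ∀ x : ℝ, BddBelow (G '' {q : ℚ | x < (q:ℝ)}) := by
    intro x
    refine ⟨0, ?_⟩
    rintro y ⟨q, _, rfl⟩
    exact hGnn q
  have hHle : ∀ (x:ℝ) (q:ℚ), x < (q:ℝ) → H x ≤ G q :=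
    fun x q h => csInf_le (hbdd x) ⟨q, h, rfl⟩
  have hHge : ∀ (x:ℝ) (q:ℚ), (q:ℝ) ≤ x → G q ≤ H x := by
    intro x q h
    refine le_csInf (hne x) ?_
    rintro y ⟨r, hr, rfl⟩
    refine hGmono q r ?_
    have : (q:ℝ) < (r:ℝ) := lt_of_le_of_lt h hr
    exact_mod_cast this.le
  have hHmono : Monotone H := by
    intro x y hxy
    exact csInf_le_csInf (hbdd x) (hne y) (Set.image_mono (fun q hq => lt_of_le_of_lt hxy hq))
  have hHnn : ∀ x, 0 ≤ H x := by
    intro x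
    refine le_csInf (hne x) ?_
    rintro y ⟨q, _, rfl⟩
    exact hGnn q
  have hHle00 : ∀ x, H x ≤ c00 := by
    intro x
    obtain ⟨q, hq⟩ := exists_rat_gt x
    exact (hHle x q hq).trans (hGle q)
  have hH0 : ∀ x, x < 0 → H x = 0 := by
    intro x hx
    obtain ⟨q, hq1, hq2⟩ := exists_rat_btwn hx
    exact le_antisymm (by simpa [hG0 q hq2] using hHle x q hq1) (hHnn x)
  have hH1 : ∀ x, (1:ℝ) ≤ x → H x = c00 := by
    intro x hx
    refine le_antisymm (hHle00 x) ?_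
    have h1 : G 1 ≤ H x := hHge x 1 (by exact_mod_cast hx)
    rwa [hG1 1 (by norm_num)] at h1
  have hHrc : ∀ x, ContinuousWithinAt H (Set.Ici x) x := by
    intro x
    rw [ContinuousWithinAt]
    apply tendsto_order.2
    constructor
    · intro b hb
      filter_upwards [self_mem_nhdsWithin] with y hy
      exact hb.trans_le (hHmono hy)
    · intro b hb
      obtain ⟨y, ⟨q, hq, rfl⟩, hyb⟩ := exists_lt_of_csInf_lt (hne x) hb
      filter_upwards [Ico_mem_nhdsGE hq] with z hz
      exact lt_of_le_of_lt (hHle z q hz.2) hyb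
  set F : StieltjesFunction ℝ := ⟨H, hHmono, hHrc⟩ with hFdef
  have hFapp : ∀ x, F x = H x := fun x => rfl
  have hbot : Tendsto (F : ℝ → ℝ) atBot (𝓝 0) := by
    apply Tendsto.congr' (f₁ := fun _ => (0:ℝ))
    · filter_upwards [eventually_lt_atBot (0:ℝ)] with x hx
      exact (hH0 x hx).symm
    · exact tendsto_const_nhds
  have htop : Tendsto (F : ℝ → ℝ) atTop (𝓝 c00) := by
    apply Tendsto.congr' (f₁ := fun _ => c00)
    · filter_upwards [eventually_ge_atTop (1:ℝ)] with x hx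
      exact (hH1 x hx).symm
    · exact tendsto_const_nhds
  set μR := F.measure with hμR
  have huniv : μR Set.univ = ENNReal.ofReal c00 := by
    rw [hμR, F.measure_univ hbot htop]
    simp
  have hfin : IsFiniteMeasure μR := ⟨by rw [huniv]; exact ENNReal.ofReal_lt_top⟩
  have hIic : ∀ t, μR (Set.Iic t) = ENNReal.ofReal (H t) := by
    intro t
    rw [hμR, F.measure_Iic hbot t]
    simp [hFapp]
  have hIoi : μR (Set.Ioi (1:ℝ)) = 0 := by
    have hcover : Set.Ioi (1:ℝ) ⊆ ⋃ n : ℕ, Set.Ioc (1:ℝ) (1+(n+1)) := by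
      intro x hx
      simp only [Set.mem_Ioi] at hx
      obtain ⟨n, hn⟩ := exists_nat_gt (x - 1)
      refine Set.mem_iUnion.mpr ⟨n, ?_⟩
      simp only [Set.mem_Ioc]
      constructor
      · exact hx
      · push_cast; linarith
    refine measure_mono_null hcover ?_
    refine measure_iUnion_null fun n => ?_
    rw [hμR, F.measure_Ioc]
    have e1 : F (1+((n:ℝ)+1)) = c00 := hH1 _ (by linarith [Nat.cast_nonneg (α := ℝ) n])
    have e2 : F 1 = c00 := hH1 _ le_rfl
    rw [e1, e2]
    simp
  have hIio : μR (Set.Iio (0:ℝ)) = 0 := by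
    have hcover : Set.Iio (0:ℝ) ⊆ ⋃ n : ℕ, Set.Iic (-(1/((n:ℝ)+1))) := by
      intro x hx
      simp only [Set.mem_Iio] at hx
      obtain ⟨n, hn⟩ := exists_nat_one_div_lt (show (0:ℝ) < -x by linarith)
      refine Set.mem_iUnion.mpr ⟨n, ?_⟩
      simp only [Set.mem_Iic]
      linarith
    refine measure_mono_null hcover ?_
    refine measure_iUnion_null fun n => ?_
    have hneg : -(1/((n:ℝ)+1)) < 0 := by
      have : (0:ℝ) < 1/((n:ℝ)+1) := by positivity
      linarith
    rw [hIic, hH0 _ hneg, ENNReal.ofReal_zero]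
  have hcompl : μR (Set.Icc (0:ℝ) 1)ᶜ = 0 := by
    have hsub2 : (Set.Icc (0:ℝ) 1)ᶜ ⊆ Set.Iio 0 ∪ Set.Ioi 1 := by
      intro x hx
      simp only [Set.mem_compl_iff, Set.mem_Icc, not_and_or, not_le] at hx
      rcases hx with h | h
      · exact Or.inl (Set.mem_Iio.mpr h)
      · exact Or.inr (Set.mem_Ioi.mpr h)
    exact measure_mono_null hsub2 (measure_union_null hIio hIoi)
  have hconv : ∀ t : ℝ, ContinuousAt H t → Tendsto (fun j => Fm (ψ j) t) atTop (𝓝 (H t)) := by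
    intro t hct
    apply tendsto_order.2
    constructor
    · intro b hb
      have hev : ∀ᶠ z in 𝓝 t, b < H z := hct.eventually (eventually_gt_nhds hb)
      obtain ⟨y, hy1, hy2⟩ := ((hev.filter_mono (nhdsWithin_le_nhds (s := Set.Iio t))).and
        eventually_mem_nhdsWithin).exists
      obtain ⟨q, hyq, hqt⟩ := exists_rat_btwn (Set.mem_Iio.mp hy2)
      have hbq : b < G q := lt_of_lt_of_le hy1 (hHle y q hyq)
      have hev2 : ∀ᶠ j in atTop, Fm (ψ j) (q:ℝ) ∈ Set.Ioi b := (hGlim q).eventually (Ioi_mem_nhds hbq)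
      filter_upwards [hev2] with j hj
      exact lt_of_lt_of_le hj (hFmmono _ hqt.le)
    · intro b hb
      obtain ⟨y, ⟨q, hq, rfl⟩, hyb⟩ := exists_lt_of_csInf_lt (hne t) hb
      have hev2 : ∀ᶠ j in atTop, Fm (ψ j) (q:ℝ) ∈ Set.Iio b := (hGlim q).eventually (Iio_mem_nhds hyb)
      filter_upwards [hev2] with j hj
      exact lt_of_le_of_lt (hFmmono _ hq.le) hj
  refine ⟨μR, hfin, hcompl, ?_⟩
  intro k
  have hmem_ae : ∀ᵐ x ∂μR, x ∈ Set.Icc (0:ℝ) 1 := by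
    rw [MeasureTheory.ae_iff]
    simpa [Set.compl_def] using hcompl
  rcases Nat.eq_zero_or_pos k with rfl | hk
  · simp only [pow_zero]
    rw [MeasureTheory.integral_const, smul_eq_mul, mul_one, measureReal_def, huniv,
      ENNReal.toReal_ofReal hc00nn]
  have hk1 : 1 ≤ k := hk
  set τ := volume.restrict (Set.Ioc (0:ℝ) 1) with hτ
  have hτfin : IsFiniteMeasure τ := by
    constructor
    rw [hτ, Measure.restrict_apply_univ, Real.volume_Ioc]
    exact ENNReal.ofReal_lt_top
  set Φ : ℝ → ℝ → ℝ := fun x t => ((k:ℝ) * t^(k-1)) * (if x ≤ t then 1 else 0) with hΦ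
  have hΦmeas : Measurable (Function.uncurry Φ) := by
    apply Measurable.mul
    · exact measurable_const.mul ((measurable_snd).pow_const (k-1))
    · exact Measurable.ite (measurableSet_le measurable_fst measurable_snd)
        measurable_const measurable_const
  have hbound : ∀ᵐ p ∂(μR.prod τ), ‖Function.uncurry Φ p‖ ≤ (k:ℝ) := by
    rw [MeasureTheory.ae_iff]
    refine measure_mono_null (fun p hp => ?_)
      (show (μR.prod τ) (Set.univ ×ˢ (Set.Ioc (0:ℝ) 1)ᶜ) = 0 from ?_)
    · simp only [Set.mem_setOf_eq, not_le] at hp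
      refine Set.mem_prod.mpr ⟨Set.mem_univ _, ?_⟩
      by_contra hmem
      simp only [Set.mem_compl_iff, not_not] at hmem
      obtain ⟨ht0, ht1⟩ := Set.mem_Ioc.mp hmem
      have h1 : ‖Function.uncurry Φ p‖ ≤ (k:ℝ) := by
        rw [Function.uncurry]
        rw [hΦ]
        simp only [Real.norm_eq_abs]
        rw [abs_mul]
        have hb1 : |(k:ℝ) * p.2^(k-1)| ≤ k := by
          rw [abs_mul, abs_of_nonneg (by positivity : (0:ℝ) ≤ (k:ℝ))]
          have : |p.2^(k-1)| ≤ 1 := by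
            rw [abs_of_nonneg (pow_nonneg ht0.le _)]
            exact pow_le_one₀ ht0.le ht1
          nlinarith [Nat.cast_nonneg (α := ℝ) k, abs_nonneg (p.2^(k-1))]
        have hb2 : |(if p.1 ≤ p.2 then (1:ℝ) else 0)| ≤ 1 := by
          by_cases h : p.1 ≤ p.2 <;> simp [h]
        calc |(k:ℝ) * p.2^(k-1)| * |(if p.1 ≤ p.2 then (1:ℝ) else 0)|
            ≤ (k:ℝ) * 1 := mul_le_mul hb1 hb2 (abs_nonneg _) (by positivity)
          _ = (k:ℝ) := mul_one _
      linarith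
    · rw [Measure.prod_prod]
      have : τ (Set.Ioc (0:ℝ) 1)ᶜ = 0 := by
        rw [hτ, Measure.restrict_apply measurableSet_Ioc.compl]
        simp
      rw [this, mul_zero]
  have hΦint : Integrable (Function.uncurry Φ) (μR.prod τ) :=
    Integrable.mono' (integrable_const (k:ℝ)) hΦmeas.aestronglyMeasurable hbound
  have hxk : ∀ᵐ x ∂μR, x^k = 1 - ∫ t, Φ x t ∂τ := by
    filter_upwards [hmem_ae] with x hx
    rw [show ∫ t, Φ x t ∂τ = 1 - x^k from hint_integral k hk1 x hx.1 hx.2]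
    ring
  have hInt1 : Integrable (fun x => ∫ t, Φ x t ∂τ) μR := hΦint.integral_prod_left
  have hswap : ∫ x, ∫ t, Φ x t ∂τ ∂μR = ∫ t, ∫ x, Φ x t ∂μR ∂τ :=
    MeasureTheory.integral_integral_swap hΦint
  have hinner2 : ∀ᵐ t ∂τ, ∫ x, Φ x t ∂μR = ((k:ℝ)*t^(k-1)) * H t := by
    refine Filter.Eventually.of_forall fun t => ?_
    rw [hΦ]
    simp only []
    rw [MeasureTheory.integral_const_mul]
    congr 1
    have hind : (fun x : ℝ => if x ≤ t then (1:ℝ) else 0)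
        = Set.indicator (Set.Iic t) (1 : ℝ → ℝ) := by
      funext x
      by_cases h : x ≤ t <;> simp [Set.indicator_apply, Set.mem_Iic, h]
    rw [hind, integral_indicator_one measurableSet_Iic, measureReal_def, hIic t,
      ENNReal.toReal_ofReal (hHnn t)]
  have hfinal : ∫ x, x^k ∂μR = c00 - ∫ t, ((k:ℝ)*t^(k-1)) * H t ∂τ := by
    calc ∫ x, x^k ∂μR = ∫ x, (1 - ∫ t, Φ x t ∂τ) ∂μR := integral_congr_ae hxk
      _ = ∫ _x, (1:ℝ) ∂μR - ∫ x, ∫ t, Φ x t ∂τ ∂μR :=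
          integral_sub (integrable_const 1) hInt1
      _ = c00 - ∫ t, ∫ x, Φ x t ∂μR ∂τ := by
          rw [hswap, MeasureTheory.integral_const, smul_eq_mul, mul_one, measureReal_def, huniv,
            ENNReal.toReal_ofReal hc00nn]
      _ = c00 - ∫ t, ((k:ℝ)*t^(k-1)) * H t ∂τ := by rw [integral_congr_ae hinner2]
  -- discrete integration by parts
  have hgint : ∀ c : ℝ, 0 ≤ c → c ≤ 1 →
      Integrable (fun t : ℝ => ((k:ℝ)*t^(k-1)) * (if c ≤ t then 1 else 0)) τ := by
    intro c hc0 hc1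
    refine Integrable.mono' (integrable_const (k:ℝ)) ?_ ?_
    · refine Measurable.aestronglyMeasurable ?_
      exact (measurable_const.mul (measurable_id.pow_const (k-1))).mul
        (Measurable.ite (measurableSet_le measurable_const measurable_id)
          measurable_const measurable_const)
    · filter_upwards [ae_restrict_mem measurableSet_Ioc] with t ht
      rw [Real.norm_eq_abs, abs_mul]
      have hb1 : |(k:ℝ) * t^(k-1)| ≤ k := by
        rw [abs_mul, abs_of_nonneg (by positivity : (0:ℝ) ≤ (k:ℝ))]
        have : |t^(k-1)| ≤ 1 := by
          rw [abs_of_nonneg (pow_nonneg ht.1.le _)]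
          exact pow_le_one₀ ht.1.le ht.2
        nlinarith [Nat.cast_nonneg (α := ℝ) k, abs_nonneg (t^(k-1))]
      have hb2 : |(if c ≤ t then (1:ℝ) else 0)| ≤ 1 := by
        by_cases h : c ≤ t <;> simp [h]
      calc |(k:ℝ) * t^(k-1)| * |(if c ≤ t then (1:ℝ) else 0)|
          ≤ (k:ℝ) * 1 := mul_le_mul hb1 hb2 (abs_nonneg _) (by positivity)
        _ = (k:ℝ) := mul_one _
  have hE1 : ∀ m, ∫ t, ((k:ℝ)*t^(k-1)) * Fm m t ∂τ
      = c00 - ∑ i ∈ Finset.range (m+1), ((i:ℝ)/(m:ℝ))^k * w m i := by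
    intro m
    have hHm : (fun t => ((k:ℝ)*t^(k-1)) * Fm m t)
        = fun t => ∑ i ∈ Finset.range (m+1),
            (((k:ℝ)*t^(k-1)) * (if ((i:ℝ)/(m:ℝ)) ≤ t then 1 else 0)) * w m i := by
      funext t
      rw [Finset.mul_sum]
      refine Finset.sum_congr rfl fun i _ => ?_
      by_cases h : ((i:ℝ)/(m:ℝ)) ≤ t <;> simp [h]
    rw [hHm, MeasureTheory.integral_finset_sum]
    · have heval : ∀ i ∈ Finset.range (m+1),
          ∫ t, (((k:ℝ)*t^(k-1)) * (if ((i:ℝ)/(m:ℝ)) ≤ t then 1 else 0)) * w m i ∂τ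
            = (1 - ((i:ℝ)/(m:ℝ))^k) * w m i := by
        intro i hi
        rw [MeasureTheory.integral_mul_const,
          hint_integral k hk1 _ (hdiv01 m i hi).1 (hdiv01 m i hi).2]
      rw [Finset.sum_congr rfl heval]
      have hsplit : ∀ i ∈ Finset.range (m+1),
          (1 - ((i:ℝ)/(m:ℝ))^k) * w m i = w m i - ((i:ℝ)/(m:ℝ))^k * w m i := fun i _ => by ring
      rw [Finset.sum_congr rfl hsplit, Finset.sum_sub_distrib, hwsum m]
    · intro i hi
      exact (hgint _ (hdiv01 m i hi).1 (hdiv01 m i hi).2).mul_const _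
  -- dominated convergence
  have hDCT : Tendsto (fun j => ∫ t, ((k:ℝ)*t^(k-1)) * Fm (ψ j) t ∂τ) atTop
      (𝓝 (∫ t, ((k:ℝ)*t^(k-1)) * H t ∂τ)) := by
    refine MeasureTheory.tendsto_integral_of_dominated_convergence
      (bound := fun _ => (k:ℝ) * c00) ?_ (integrable_const _) ?_ ?_
    · intro j
      refine Measurable.aestronglyMeasurable ?_
      exact (measurable_const.mul (measurable_id.pow_const (k-1))).mul
        ((hFmmono (ψ j)).measurable)
    · intro j
      filter_upwards [ae_restrict_mem measurableSet_Ioc] with t ht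
      rw [Real.norm_eq_abs, abs_mul]
      have hb1 : |(k:ℝ) * t^(k-1)| ≤ k := by
        rw [abs_mul, abs_of_nonneg (by positivity : (0:ℝ) ≤ (k:ℝ))]
        have : |t^(k-1)| ≤ 1 := by
          rw [abs_of_nonneg (pow_nonneg ht.1.le _)]
          exact pow_le_one₀ ht.1.le ht.2
        nlinarith [Nat.cast_nonneg (α := ℝ) k, abs_nonneg (t^(k-1))]
      have hb2 : |Fm (ψ j) t| ≤ c00 := by
        rw [abs_of_nonneg (hFmnn _ t)]
        exact hFmle _ t
      exact mul_le_mul hb1 hb2 (abs_nonneg _) (by positivity)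
    · have hv : ∀ᵐ t ∂(volume : Measure ℝ), ContinuousAt H t := by
        rw [MeasureTheory.ae_iff]
        exact Set.Countable.measure_zero (hHmono.countable_not_continuousAt) _
      filter_upwards [ae_restrict_of_ae hv] with t ht
      exact (hconv t ht).const_mul _
  have hTj : Tendsto (fun j => ∑ i ∈ Finset.range (ψ j + 1), ((i:ℝ)/((ψ j : ℕ):ℝ))^k * w (ψ j) i)
      atTop (𝓝 (φ k 0)) := by
    have h := (Tconv φ hpos hrec k).comp (hψmono.tendsto_atTop)
    refine h.congr fun j => ?_
    refine Finset.sum_congr rfl fun i _ => ?_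
    rw [hw]
  have hlim : ∫ t, ((k:ℝ)*t^(k-1)) * H t ∂τ = c00 - φ k 0 := by
    refine tendsto_nhds_unique (hDCT.congr fun j => hE1 (ψ j)) ?_
    exact tendsto_const_nhds.sub hTj
  rw [hfinal, hlim]
  ring

lemma integrable_powmul (ν : Measure (Set.Icc (0:ℝ) 1)) [IsFiniteMeasure ν] (k l : ℕ) :
    Integrable (fun q : Set.Icc (0:ℝ) 1 => (q:ℝ)^k * (1-(q:ℝ))^l) ν := by
  have hcont : Continuous (fun q : Set.Icc (0:ℝ) 1 => (q:ℝ)^k * (1-(q:ℝ))^l) :=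
    (continuous_subtype_val.pow k).mul ((continuous_const.sub continuous_subtype_val).pow l)
  have h := (BoundedContinuousFunction.mkOfCompact (⟨_, hcont⟩ : C(Set.Icc (0:ℝ) 1, ℝ))).integrable ν
  exact h

lemma joint_of_monomial (φ : ℕ → ℕ → ℝ)
    (hrec : ∀ k l : ℕ, φ k l = φ (k + 1) l + φ k (l + 1))
    (ν : Measure (Set.Icc (0:ℝ) 1)) [IsFiniteMeasure ν]
    (hmono : ∀ k : ℕ, ∫ q : Set.Icc (0:ℝ) 1, (q:ℝ)^k ∂ν = φ k 0) :
    ∀ l k : ℕ, φ k l = ∫ q : Set.Icc (0:ℝ) 1, (q:ℝ)^k * (1-(q:ℝ))^l ∂ν := by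
  intro l
  induction l with
  | zero =>
    intro k
    simp only [pow_zero, mul_one]
    exact (hmono k).symm
  | succ l ih =>
    intro k
    have h1 : φ k (l+1) = φ k l - φ (k+1) l := by linarith [hrec k l]
    rw [h1, ih k, ih (k+1),
      ← integral_sub (integrable_powmul ν k l) (integrable_powmul ν (k+1) l)]
    refine integral_congr_ae (Filter.Eventually.of_forall fun q => ?_)
    ring

lemma integrable_contmap (ν : Measure (Set.Icc (0:ℝ) 1)) [IsFiniteMeasure ν]
    (f : C(Set.Icc (0:ℝ) 1, ℝ)) : Integrable f ν := by
  have h := (BoundedContinuousFunction.mkOfCompact f).integrable ν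
  exact h

lemma cont_integral (ν : Measure (Set.Icc (0:ℝ) 1)) [IsFiniteMeasure ν] :
    Continuous fun f : C(Set.Icc (0:ℝ) 1, ℝ) => ∫ x, f x ∂ν := by
  refine Metric.continuous_iff.mpr fun f ε hε => ?_
  have hM : (0:ℝ) ≤ (ν Set.univ).toReal := ENNReal.toReal_nonneg
  refine ⟨ε / ((ν Set.univ).toReal + 1), by positivity, fun g hg => ?_⟩
  rw [Real.dist_eq, ← integral_sub (integrable_contmap ν g) (integrable_contmap ν f)]
  have hb : ∀ᵐ x ∂ν, ‖g x - f x‖ ≤ dist g f :=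
    Filter.Eventually.of_forall fun x => by
      rw [show ‖g x - f x‖ = dist (g x) (f x) from (Real.dist_eq _ _).symm]
      exact ContinuousMap.dist_apply_le_dist x
  have hle := norm_integral_le_of_norm_le_const hb
  have h2 : dist g f * ((ν Set.univ).toReal + 1) < ε :=
    (lt_div_iff₀ (by positivity)).mp hg
  calc ‖∫ x, (g x - f x) ∂ν‖ ≤ dist g f * (ν Set.univ).toReal := hle
    _ < ε := by nlinarith [dist_nonneg (x := g) (y := f)]

lemma unique_measure (ν₁ ν₂ : Measure (Set.Icc (0:ℝ) 1))
    [IsFiniteMeasure ν₁] [IsFiniteMeasure ν₂]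
    (h : ∀ k : ℕ, ∫ q : Set.Icc (0:ℝ) 1, (q:ℝ)^k ∂ν₁ = ∫ q : Set.Icc (0:ℝ) 1, (q:ℝ)^k ∂ν₂) :
    ν₁ = ν₂ := by
  have hpow : ∀ (ν : Measure (Set.Icc (0:ℝ) 1)) [IsFiniteMeasure ν] (i : ℕ),
      Integrable (fun q : Set.Icc (0:ℝ) 1 => (q:ℝ)^i) ν := by
    intro ν _ i
    have h := integrable_powmul ν i 0
    simpa using h
  have hpolyint : ∀ (ν : Measure (Set.Icc (0:ℝ) 1)) [IsFiniteMeasure ν] (p : Polynomial ℝ),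
      ∫ q : Set.Icc (0:ℝ) 1, p.eval (q:ℝ) ∂ν
        = ∑ i ∈ Finset.range (p.natDegree+1), p.coeff i * ∫ q : Set.Icc (0:ℝ) 1, (q:ℝ)^i ∂ν := by
    intro ν _ p
    rw [show (fun q : Set.Icc (0:ℝ) 1 => p.eval (q:ℝ))
        = fun q : Set.Icc (0:ℝ) 1 => ∑ i ∈ Finset.range (p.natDegree+1), p.coeff i * ((q:ℝ))^i from
      funext fun q => Polynomial.eval_eq_sum_range _]
    rw [integral_finset_sum _ (fun i _ => (hpow ν i).const_mul (p.coeff i))]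
    exact Finset.sum_congr rfl fun i _ => MeasureTheory.integral_const_mul _ _
  have hc : ∀ f : C(Set.Icc (0:ℝ) 1, ℝ), ∫ x, f x ∂ν₁ = ∫ x, f x ∂ν₂ := by
    have hS : IsClosed {f : C(Set.Icc (0:ℝ) 1, ℝ) | ∫ x, f x ∂ν₁ = ∫ x, f x ∂ν₂} := by
      have heq : {f : C(Set.Icc (0:ℝ) 1, ℝ) | ∫ x, f x ∂ν₁ = ∫ x, f x ∂ν₂}
          = (fun f : C(Set.Icc (0:ℝ) 1, ℝ) => ∫ x, f x ∂ν₁ - ∫ x, f x ∂ν₂) ⁻¹' {0} := by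
        ext f
        simp [sub_eq_zero]
      rw [heq]
      exact IsClosed.preimage ((cont_integral ν₁).sub (cont_integral ν₂)) isClosed_singleton
    intro f
    have hdense := polynomialFunctions_closure_eq_top (0:ℝ) 1
    have hmem : f ∈ (polynomialFunctions (Set.Icc (0:ℝ) 1)).topologicalClosure := by
      rw [hdense]; trivial
    have hmem2 : f ∈ closure ((polynomialFunctions (Set.Icc (0:ℝ) 1)) :
        Set C(Set.Icc (0:ℝ) 1, ℝ)) := by
      rw [← Subalgebra.topologicalClosure_coe]
      exact hmem
    have hsub : ((polynomialFunctions (Set.Icc (0:ℝ) 1)) : Set C(Set.Icc (0:ℝ) 1, ℝ))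
        ⊆ {f : C(Set.Icc (0:ℝ) 1, ℝ) | ∫ x, f x ∂ν₁ = ∫ x, f x ∂ν₂} := by
      intro g hg
      rw [polynomialFunctions_coe] at hg
      obtain ⟨p, rfl⟩ := hg
      simp only [Set.mem_setOf_eq]
      have happ : ∀ (ν : Measure (Set.Icc (0:ℝ) 1)),
          ∫ x, (Polynomial.toContinuousMapOnAlgHom (Set.Icc (0:ℝ) 1) p) x ∂ν
            = ∫ q : Set.Icc (0:ℝ) 1, p.eval (q:ℝ) ∂ν := fun ν => rfl
      rw [happ ν₁, happ ν₂, hpolyint ν₁ p, hpolyint ν₂ p]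
      exact Finset.sum_congr rfl fun i _ => by rw [h i]
    exact closure_minimal hsub hS hmem2
  refine ext_of_forall_lintegral_eq_of_IsFiniteMeasure fun f => ?_
  have h1 : (∫⁻ x, f x ∂ν₁).toReal = (∫⁻ x, f x ∂ν₂).toReal := by
    rw [BoundedContinuousFunction.toReal_lintegral_coe_eq_integral,
      BoundedContinuousFunction.toReal_lintegral_coe_eq_integral]
    exact hc ⟨fun x => (f x : ℝ), by exact NNReal.continuous_coe.comp f.continuous⟩
  exact (ENNReal.toReal_eq_toReal_iff'
    (BoundedContinuousFunction.lintegral_lt_top_of_nnreal ν₁ f).ne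
    (BoundedContinuousFunction.lintegral_lt_top_of_nnreal ν₂ f).ne).mp h1

/-- Hausdorff moment problem variant: a doubly-indexed nonnegative array satisfying the
recursion `φ(k,l) = φ(k+1,l) + φ(k,l+1)` is the joint moment array of a unique finite
measure on `[0,1]`. -/
theorem stmt0 (φ : ℕ → ℕ → ℝ)
    (hpos : ∀ k l : ℕ, 0 ≤ φ k l)
    (hrec : ∀ k l : ℕ, φ k l = φ (k + 1) l + φ k (l + 1)) :
    ∃! ν : Measure (Set.Icc (0 : ℝ) 1),
      IsFiniteMeasure ν ∧
        ∀ k l : ℕ, φ k l = ∫ q, (q : ℝ) ^ k * (1 - (q : ℝ)) ^ l ∂ν := by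
  obtain ⟨μR, hfin, hcompl, hmom⟩ := exists_repr φ hpos hrec
  have hmem_ae : ∀ᵐ x ∂μR, x ∈ Set.Icc (0:ℝ) 1 := by
    rw [MeasureTheory.ae_iff]
    simpa [Set.compl_def] using hcompl
  set ν : Measure (Set.Icc (0:ℝ) 1) := Measure.comap Subtype.val μR with hν
  have hemb : MeasurableEmbedding (Subtype.val : Set.Icc (0:ℝ) 1 → ℝ) :=
    MeasurableEmbedding.subtype_coe measurableSet_Icc
  have hmap : ν.map Subtype.val = μR := by
    rw [hν, hemb.map_comap, Subtype.range_coe, Measure.restrict_eq_self_of_ae_mem hmem_ae]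
  have hνfin : IsFiniteMeasure ν := by
    constructor
    have h1 : (ν.map Subtype.val) Set.univ = ν Set.univ := by
      rw [Measure.map_apply hemb.measurable MeasurableSet.univ]
      simp
    rw [← h1, hmap]
    exact hfin.measure_univ_lt_top
  haveI := hνfin
  have hint : ∀ g : ℝ → ℝ, ∫ q : Set.Icc (0:ℝ) 1, g (q : ℝ) ∂ν = ∫ x, g x ∂μR := by
    intro g
    rw [← hmap, hemb.integral_map]
  have hmono : ∀ k : ℕ, ∫ q : Set.Icc (0:ℝ) 1, (q:ℝ)^k ∂ν = φ k 0 := fun k =>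
    (hint (fun x => x^k)).trans (hmom k)
  refine ⟨ν, ⟨hνfin, fun k l => joint_of_monomial φ hrec ν hmono l k⟩, ?_⟩
  rintro ν' ⟨hfin', hmom'⟩
  haveI := hfin'
  refine unique_measure ν' ν fun k => ?_
  have ha := hmom' k 0
  simp only [pow_zero, mul_one] at ha
  rw [← ha, ← (hmono k)]
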